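/- arXiv:1705.07176 — 2 statements merged into one kernel-verified Lean document; each statement's English description precedes it below -/
import Mathlib

section
/- Let σ ∈ (0,1), L > 0, and 0 < ηL < 1, and let G(η) be the 3×3 real matrix with rows (σ, 0, η), (σ, σ, 2η), (L, 2L, σ+2ηL). Then: (1) the spectral radius θ(η) = ρ(G(η)) satisfies σ < θ(η) < σ + 4(ηL)^{1/3}; and (2) for any vector χ = (χ₁, χ₂, χ₃) with nonnegative entries, χ₃ = 1, and G(η)χ = θ(η)χ, one has χ₂ ≤ 2η^{1/3}/L^{2/3}. -/
/-- Spectral radius of a real 3×3 matrix: the largest modulus of its complex eigenvalues. -/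
noncomputable def specRad (M : Matrix (Fin 3) (Fin 3) ℝ) : ℝ :=
  sSup ((fun z : ℂ => ‖z‖) '' spectrum ℂ (M.map Complex.ofReal))

set_option maxHeartbeats 1000000 in
/-- for the Acc-DNGD-NSC linear-system matrix G(η),
(1) σ < ρ(G(η)) < σ + 4(ηL)^{1/3}, and (2) for any nonnegative eigenvector χ normalized
by χ₃ = 1 associated with ρ(G(η)), its second entry satisfies χ₂ ≤ 2η^{1/3}/L^{2/3}. -/
theorem stmt_13 (σ L η : ℝ) (hσ0 : 0 < σ) (hσ1 : σ < 1) (hL : 0 < L)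
    (hη0 : 0 < η) (hηL : η * L < 1)
    (G : Matrix (Fin 3) (Fin 3) ℝ)
    (hG : G = !![σ, 0, η; σ, σ, 2 * η; L, 2 * L, σ + 2 * η * L]) :
    (σ < specRad G ∧ specRad G < σ + 4 * (η * L) ^ ((1 : ℝ) / 3)) ∧
    (∀ χ : Fin 3 → ℝ, (∀ i, 0 ≤ χ i) → χ 2 = 1 → G.mulVec χ = specRad G • χ →
      χ 1 ≤ 2 * η ^ ((1 : ℝ) / 3) / L ^ ((2 : ℝ) / 3)) := by
  have hηL0 : 0 < η * L := mul_pos hη0 hL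
  set m : ℝ := (η * L) ^ ((1 : ℝ) / 3) with hm
  have hm0 : 0 < m := Real.rpow_pos_of_pos hηL0 _
  have hm1 : m < 1 := Real.rpow_lt_one hηL0.le hηL (by norm_num)
  have hm3 : m ^ 3 = η * L := by
    rw [hm, ← Real.rpow_natCast ((η * L) ^ ((1:ℝ)/3)) 3, ← Real.rpow_mul hηL0.le]
    norm_num
  -- characterization of the spectrum
  have hspec : ∀ z : ℂ, z ∈ spectrum ℂ (G.map Complex.ofReal) ↔
      (z - σ)^3 - 2*(η*L)*(z-σ)^2 - 5*(η*L)*(z-σ) - 2*σ*(η*L) = 0 := by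
    intro z
    have hM : algebraMap ℂ (Matrix (Fin 3) (Fin 3) ℂ) z - G.map Complex.ofReal
        = !![z - σ, 0, -η; -σ, z - σ, -(2*η); -L, -(2*L), z - (σ + 2*η*L)] := by
      subst hG
      ext i j
      fin_cases i <;> fin_cases j <;>
        simp [Matrix.algebraMap_matrix_apply, Matrix.map_apply]
    rw [spectrum.mem_iff, Matrix.isUnit_iff_isUnit_det, isUnit_iff_ne_zero, ne_eq, not_not, hM,
      Matrix.det_fin_three]
    norm_num [Matrix.cons_val_two, Matrix.vecHead, Matrix.vecTail]
    constructor <;> intro h <;> linear_combination h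
  -- value of the characteristic cubic at 4m is positive
  have hp4m : 0 < (4*m)^3 - 2*(η*L)*(4*m)^2 - 5*(η*L)*(4*m) - 2*σ*(η*L) := by
    rw [← hm3]
    nlinarith [pow_pos hm0 3, mul_pos (pow_pos hm0 3) (sub_pos.mpr hm1),
      mul_pos (pow_pos hm0 3) (sub_pos.mpr hσ1),
      mul_pos (mul_pos (pow_pos hm0 3) hm0) (sub_pos.mpr hm1)]
  -- a positive real root a ∈ (0, 4m)
  obtain ⟨a, ha_mem, ha⟩ : ∃ a ∈ Set.Ioo (0:ℝ) (4*m),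
      a^3 - 2*(η*L)*a^2 - 5*(η*L)*a - 2*σ*(η*L) = 0 := by
    have hcont : ContinuousOn (fun a : ℝ => a^3 - 2*(η*L)*a^2 - 5*(η*L)*a - 2*σ*(η*L))
        (Set.Icc 0 (4*m)) := (by continuity : Continuous _).continuousOn
    have h0 : (fun a : ℝ => a^3 - 2*(η*L)*a^2 - 5*(η*L)*a - 2*σ*(η*L)) 0 < 0 := by
      simp; positivity
    have hsub := intermediate_value_Ioo (by positivity : (0:ℝ) ≤ 4*m) hcont
    have : (0:ℝ) ∈ Set.Ioo ((fun a : ℝ => a^3 - 2*(η*L)*a^2 - 5*(η*L)*a - 2*σ*(η*L)) 0)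
        ((fun a : ℝ => a^3 - 2*(η*L)*a^2 - 5*(η*L)*a - 2*σ*(η*L)) (4*m)) :=
      ⟨h0, hp4m⟩
    obtain ⟨x, hx, hfx⟩ := hsub this
    exact ⟨x, hx, hfx⟩
  set S := (fun z : ℂ => ‖z‖) '' spectrum ℂ (G.map Complex.ofReal) with hS
  have hfin : S.Finite := (Matrix.finite_spectrum _).image _
  have hroot_mem : ((σ + a : ℝ) : ℂ) ∈ spectrum ℂ (G.map Complex.ofReal) := by
    rw [hspec]
    have hc := congrArg (Complex.ofReal) ha
    push_cast at hc ⊢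
    linear_combination hc
  have hmemS : (σ + a) ∈ S := by
    refine ⟨((σ + a : ℝ) : ℂ), hroot_mem, ?_⟩
    show ‖((σ + a : ℝ) : ℂ)‖ = σ + a
    rw [Complex.norm_real, Real.norm_eq_abs]
    exact abs_of_pos (by linarith [ha_mem.1])
  have hne : S.Nonempty := ⟨_, hmemS⟩
  have hbdd : BddAbove S := hfin.bddAbove
  have hspecS : specRad G = sSup S := rfl
  have hlow : σ < specRad G := by
    have := le_csSup hbdd hmemS
    rw [hspecS]
    linarith [ha_mem.1]
  have hub : specRad G < σ + 4*m := by
    have hsup_mem : sSup S ∈ S := hne.csSup_mem hfin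
    obtain ⟨z, hz, hzabs⟩ := hsup_mem
    rw [hspec] at hz
    set s : ℝ := ‖z - σ‖ with hsdef
    have hs0 : 0 ≤ s := norm_nonneg _
    have hz' : (z - σ)^3 = ((2*η*L : ℝ) : ℂ)*(z-σ)^2 + ((5*η*L : ℝ) : ℂ)*(z-σ)
        + ((2*σ*η*L : ℝ) : ℂ) := by
      push_cast
      linear_combination hz
    have h1 : s^3 ≤ 2*η*L*s^2 + 5*η*L*s + 2*σ*η*L := by
      have e1 : s^3 = ‖(z-σ)^3‖ := by rw [norm_pow]
      rw [e1, hz']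
      calc ‖((2*η*L : ℝ) : ℂ)*(z-σ)^2 + ((5*η*L : ℝ) : ℂ)*(z-σ)
            + ((2*σ*η*L : ℝ) : ℂ)‖
          ≤ ‖((2*η*L : ℝ) : ℂ)*(z-σ)^2 + ((5*η*L : ℝ) : ℂ)*(z-σ)‖
            + ‖((2*σ*η*L : ℝ) : ℂ)‖ := norm_add_le _ _
        _ ≤ ‖((2*η*L : ℝ) : ℂ)*(z-σ)^2‖ + ‖((5*η*L : ℝ) : ℂ)*(z-σ)‖
            + ‖((2*σ*η*L : ℝ) : ℂ)‖ := by
            gcongr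
            exact norm_add_le _ _
        _ = 2*η*L*s^2 + 5*η*L*s + 2*σ*η*L := by
            rw [norm_mul, norm_mul, norm_pow, Complex.norm_real, Complex.norm_real,
              Complex.norm_real, Real.norm_eq_abs, Real.norm_eq_abs, Real.norm_eq_abs,
              abs_of_nonneg (by positivity), abs_of_nonneg (by positivity),
              abs_of_nonneg (by positivity)]
    have hs4 : s < 4*m := by
      by_contra hcon
      push_neg at hcon
      have h1' : s^3 ≤ 2*m^3*s^2 + 5*m^3*s + 2*σ*m^3 := by rw [hm3]; linarith
      nlinarith [mul_nonneg (sq_nonneg s) (sub_nonneg.mpr hcon),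
        mul_nonneg (mul_nonneg hm0.le hs0) (sub_nonneg.mpr hcon),
        mul_nonneg (mul_nonneg (mul_pos hm0 hm0).le hs0) (sub_nonneg.mpr hm1.le),
        mul_nonneg (mul_pos hm0 hm0).le (sub_nonneg.mpr hcon),
        mul_pos (pow_pos hm0 3) (by linarith : (0:ℝ) < 12 - 2*σ),
        mul_nonneg (mul_nonneg hm0.le (sq_nonneg s))
          (sub_nonneg.mpr (by nlinarith : m^2 ≤ 1))]
    have hzle : ‖z‖ ≤ σ + s := by
      calc ‖z‖ = ‖(σ:ℂ) + (z - σ)‖ := by congr 1; ring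
        _ ≤ ‖(σ:ℂ)‖ + s := norm_add_le _ _
        _ = σ + s := by rw [Complex.norm_real, Real.norm_eq_abs, abs_of_pos hσ0]
    rw [hspecS, ← hzabs]
    linarith
  refine ⟨⟨hlow, hub⟩, ?_⟩
  intro χ hχnn hχ2 heig
  have hrow := congrFun heig 2
  simp [hG, Matrix.mulVec, dotProduct, Fin.sum_univ_three, hχ2] at hrow
  rw [← hG] at hrow
  -- hrow : L * χ 0 + 2*L * χ 1 + (σ + 2*η*L) = specRad G
  have hχ1le : 2 * L * χ 1 ≤ specRad G - σ := by nlinarith [hχnn 0, mul_nonneg hL.le (hχnn 0)]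
  have key : 2 * L * χ 1 < 4 * m := by linarith
  have hmL : m = η^((1:ℝ)/3) * L^((1:ℝ)/3) := by
    rw [hm, Real.mul_rpow hη0.le hL.le]
  have hLsplit : L^((1:ℝ)/3) * L^((2:ℝ)/3) = L := by
    rw [← Real.rpow_add hL]
    norm_num
  have hL13 : 0 < L^((1:ℝ)/3) := Real.rpow_pos_of_pos hL _
  have hL23 : 0 < L^((2:ℝ)/3) := Real.rpow_pos_of_pos hL _
  have hη13 : 0 < η^((1:ℝ)/3) := Real.rpow_pos_of_pos hη0 _
  rw [le_div_iff₀ hL23]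
  nlinarith [mul_pos hL13 hL23, mul_nonneg (hχnn 1) hL23.le,
    mul_lt_mul_of_pos_right key hL13]
end

section
/- Let σ ∈ (0,1), L > 0, and 0 < η < √σ/(2√2·L), and let G(η) be the 3×3 real matrix with rows (σ, 0, η), (σ, σ, 2η), (L, 2L, σ+2ηL). Then: (1) the spectral radius θ(η) = ρ(G(η)) satisfies θ(η) ≥ σ + (σηL)^{1/3}; and (2) for any vector χ = (χ₁, χ₂, χ₃) with χ₃ = 1 and G(η)χ = θ(η)χ, one has χ₁ = η/(θ(η) − σ) < η/(σηL)^{1/3}. -/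
-- key lemma: strict bound on spectral radius
lemma specRad_gt (σ L η : ℝ) (hσ0 : 0 < σ) (hL : 0 < L) (hη0 : 0 < η)
    (G : Matrix (Fin 3) (Fin 3) ℝ)
    (hG : G = !![σ, 0, η; σ, σ, 2 * η; L, 2 * L, σ + 2 * η * L]) :
    σ + (σ * η * L) ^ ((1 : ℝ) / 3) < specRad G := by
  set c : ℝ := (σ * η * L) ^ ((1 : ℝ) / 3) with hc
  have hx0 : 0 < σ * η * L := by positivity
  have hc0 : 0 < c := Real.rpow_pos_of_pos hx0 _
  have hc3 : c ^ 3 = σ * η * L := by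
    rw [hc, ← Real.rpow_natCast (_ ^ _) 3, ← Real.rpow_mul hx0.le]
    norm_num
  -- the cubic
  set f : ℝ → ℝ := fun μ => μ ^ 3 - 2 * η * L * μ ^ 2 - 5 * η * L * μ - 2 * σ * η * L with hf
  have hfc : f c < 0 := by
    have h1 : f c = c ^ 3 - 2 * η * L * c ^ 2 - 5 * η * L * c - 2 * σ * η * L := rfl
    rw [h1, hc3]
    nlinarith [sq_nonneg c]
  set b : ℝ := 1 + 2 * η * L + 5 * η * L + 2 * σ * η * L with hb
  have hb1 : 1 ≤ b := by nlinarith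
  have hfb : 0 < f b := by
    have hbb : b ≤ b ^ 2 := by nlinarith
    have : b ^ 2 * 1 ≤ f b := by
      have : f b = b ^ 2 * (b - 2 * η * L) - 5 * η * L * b - 2 * σ * η * L := by ring
      nlinarith [sq_nonneg b]
    linarith
  have hcb : c ≤ b := by
    rcases le_or_gt (σ * η * L) 1 with h | h
    · have : c ≤ 1 := Real.rpow_le_one hx0.le h (by norm_num)
      linarith [mul_pos (mul_pos hσ0 hη0) hL]
    · have : c ≤ (σ * η * L) ^ (1 : ℝ) := Real.rpow_le_rpow_of_exponent_le h.le (by norm_num)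
      rw [Real.rpow_one] at this
      nlinarith
  obtain ⟨μ, hμmem, hμ0⟩ := intermediate_value_Icc hcb (Continuous.continuousOn (by simp only [hf]; fun_prop))
    (Set.mem_Icc.mpr ⟨hfc.le, hfb.le⟩)
  have hμc : c < μ := lt_of_le_of_ne hμmem.1 (fun h => by rw [← h] at hμ0; linarith)
  -- σ + μ is a real eigenvalue
  have hM : (σ + μ) • (1 : Matrix (Fin 3) (Fin 3) ℝ) - G
      = !![μ, 0, -η; -σ, μ, -2 * η; -L, -2 * L, μ - 2 * η * L] := by
    subst hG
    ext i j
    fin_cases i <;> fin_cases j <;>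
      simp [Matrix.smul_apply, Matrix.one_apply, Matrix.sub_apply] <;> ring
  have hdet : ((σ + μ) • (1 : Matrix (Fin 3) (Fin 3) ℝ) - G).det = f μ := by
    rw [hM]
    show _ = μ ^ 3 - 2 * η * L * μ ^ 2 - 5 * η * L * μ - 2 * σ * η * L
    simp [Matrix.det_fin_three]
    ring
  have hmem : (↑(σ + μ) : ℂ) ∈ spectrum ℂ (G.map Complex.ofReal) := by
    rw [spectrum.mem_iff]
    have heq : (algebraMap ℂ (Matrix (Fin 3) (Fin 3) ℂ)) ((σ + μ : ℝ) : ℂ) - G.map Complex.ofReal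
        = ((σ + μ) • (1 : Matrix (Fin 3) (Fin 3) ℝ) - G).map Complex.ofReal := by
      ext i j
      by_cases h : i = j <;>
        simp [Matrix.algebraMap_matrix_apply, h, Matrix.one_apply, Matrix.sub_apply,
          Matrix.smul_apply, Matrix.map_apply, smul_eq_mul]
    rw [heq]
    intro hu
    rw [Matrix.isUnit_iff_isUnit_det] at hu
    rw [show (((σ + μ) • (1 : Matrix (Fin 3) (Fin 3) ℝ) - G).map Complex.ofReal)
        = Complex.ofRealHom.mapMatrix ((σ + μ) • (1 : Matrix (Fin 3) (Fin 3) ℝ) - G) from rfl,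
      ← RingHom.map_det, hdet, hμ0] at hu
    simp at hu
  -- conclude
  have hbdd : BddAbove ((fun z : ℂ => ‖z‖) '' spectrum ℂ (G.map Complex.ofReal)) :=
    ((Matrix.finite_spectrum _).image _).bddAbove
  have hle : ‖((σ + μ : ℝ) : ℂ)‖ ≤ specRad G :=
    le_csSup hbdd ⟨_, hmem, rfl⟩
  rw [Complex.norm_real, Real.norm_eq_abs, abs_of_pos (by linarith)] at hle
  linarith

/-- for the Acc-DNGD-NSC linear-system matrix G(η) with
0 < η < √σ/(2√2·L): (1) ρ(G(η)) ≥ σ + (σηL)^{1/3}; and (2) for any eigenvector χ of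
ρ(G(η)) normalized by χ₃ = 1, one has χ₁ = η/(ρ(G(η)) − σ) < η/(σηL)^{1/3}. -/
theorem stmt_14 (σ L η : ℝ) (hσ0 : 0 < σ) (hσ1 : σ < 1) (hL : 0 < L)
    (hη0 : 0 < η) (hη : η < Real.sqrt σ / (2 * Real.sqrt 2 * L))
    (G : Matrix (Fin 3) (Fin 3) ℝ)
    (hG : G = !![σ, 0, η; σ, σ, 2 * η; L, 2 * L, σ + 2 * η * L]) :
    (σ + (σ * η * L) ^ ((1 : ℝ) / 3) ≤ specRad G) ∧
    (∀ χ : Fin 3 → ℝ, χ 2 = 1 → G.mulVec χ = specRad G • χ →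
      χ 0 = η / (specRad G - σ) ∧ η / (specRad G - σ) < η / (σ * η * L) ^ ((1 : ℝ) / 3)) := by
  have key := specRad_gt σ L η hσ0 hL hη0 G hG
  have hc0 : 0 < (σ * η * L) ^ ((1 : ℝ) / 3) := Real.rpow_pos_of_pos (by positivity) _
  subst hG
  refine ⟨key.le, fun χ hχ2 heq => ?_⟩
  have h0 := congrFun heq 0
  simp [Matrix.mulVec, dotProduct, Fin.sum_univ_three, hχ2] at h0
  set θ := specRad !![σ, 0, η; σ, σ, 2 * η; L, 2 * L, σ + 2 * η * L] with hθ
  have hθσ : θ - σ > (σ * η * L) ^ ((1 : ℝ) / 3) := by linarith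
  have hne : θ - σ ≠ 0 := (lt_trans hc0 hθσ).ne'
  constructor
  · rw [eq_div_iff hne]
    linarith
  · exact div_lt_div_of_pos_left hη0 hc0 hθσ
end
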